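/- Let n ≥ 3, let f be an n-variable Boolean function, and suppose d(f, ℓ_{ω̂}) ≤ 2^{n−3} for some ω̂ ∈ {0,1}^n. Then |W_f(ω̂)| = max_{ω ∈ {0,1}^n} |W_f(ω)|; moreover |W_f(z)| < |W_f(ω̂)| for every z ≠ ω̂. -/

import Mathlib

/-- Walsh transform of an n-variable Boolean function at point ω. -/
def walsh {n : ℕ} (f : (Fin n → ZMod 2) → ZMod 2) (ω : Fin n → ZMod 2) : ℤ :=
  ∑ x : Fin n → ZMod 2, (-1 : ℤ) ^ (f x + ∑ i, ω i * x i).val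

/-- The linear Boolean function x ↦ ω·x. -/
def linfun {n : ℕ} (ω : Fin n → ZMod 2) : (Fin n → ZMod 2) → ZMod 2 :=
  fun x => ∑ i, ω i * x i

/-- Hamming distance between two n-variable Boolean functions. -/
def hamming {n : ℕ} (f g : (Fin n → ZMod 2) → ZMod 2) : ℕ :=
  (Finset.univ.filter fun x => f x ≠ g x).card

lemma zmod2_add11 : ∀ a : ZMod 2, a + 1 + 1 = a := by decide
lemma zmod2_cases : ∀ a : ZMod 2, (a + 1 = 1 ↔ a = 0) := by decide
lemma zmod2_not : ∀ a : ZMod 2, (¬ (a = 1)) ↔ a = 0 := by decide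
lemma zmod2_ne_iff : ∀ a b : ZMod 2, (a ≠ b) ↔ a + b = 1 := by decide
lemma zmod2_add_eq_zero : ∀ a b : ZMod 2, a + b = 0 → a = b := by decide

lemma card_univ_bool (n : ℕ) : Fintype.card (Fin n → ZMod 2) = 2 ^ n := by simp

lemma walsh_eq {n : ℕ} (f : (Fin n → ZMod 2) → ZMod 2) (ω : Fin n → ZMod 2) :
    walsh f ω = 2 ^ n - 2 * (hamming f (linfun ω) : ℤ) := by
  classical
  have hterm : ∀ x : Fin n → ZMod 2, ((-1 : ℤ)) ^ (f x + ∑ i, ω i * x i).val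
      = 1 - 2 * (if f x ≠ linfun ω x then (1:ℤ) else 0) := by
    intro x
    have h1 : (f x + ∑ i, ω i * x i) = f x + linfun ω x := rfl
    rw [h1]
    generalize f x = a
    generalize linfun ω x = b
    have hab : ∀ a : ZMod 2, a = 0 ∨ a = 1 := by decide
    rcases hab a with rfl | rfl <;> rcases hab b with rfl | rfl <;> simp <;> rfl
  unfold walsh
  rw [Finset.sum_congr rfl (fun x _ => hterm x), Finset.sum_sub_distrib,
    ← Finset.mul_sum, Finset.sum_boole]
  simp [hamming, card_univ_bool]

lemma hamming_comm {n : ℕ} (f g : (Fin n → ZMod 2) → ZMod 2) :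
    hamming f g = hamming g f := by
  unfold hamming
  congr 1
  apply Finset.filter_congr
  intro x _
  simp [ne_comm]

lemma hamming_triangle {n : ℕ} (f g h : (Fin n → ZMod 2) → ZMod 2) :
    hamming f h ≤ hamming f g + hamming g h := by
  classical
  unfold hamming
  refine le_trans (Finset.card_le_card ?_) (Finset.card_union_le _ _)
  intro x hx
  simp only [Finset.mem_filter, Finset.mem_union, Finset.mem_univ, true_and] at *
  by_contra hc
  push_neg at hc
  exact hx (hc.1.trans hc.2)

lemma count_linfun {n : ℕ} (c : Fin n → ZMod 2) (i0 : Fin n) (hi0 : c i0 = 1) :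
    (Finset.univ.filter fun x : Fin n → ZMod 2 => (∑ i, c i * x i) = 1).card = 2 ^ (n - 1) := by
  classical
  set g : (Fin n → ZMod 2) → (Fin n → ZMod 2) :=
    fun x => Function.update x i0 (x i0 + 1) with hg
  have hgg : ∀ x, g (g x) = x := by
    intro x
    funext j
    by_cases hj : j = i0
    · subst hj
      simp only [hg, Function.update_self]
      exact zmod2_add11 (x j)
    · simp [hg, Function.update_of_ne hj]
  have hφg : ∀ x, (∑ i, c i * g x i) = (∑ i, c i * x i) + 1 := by
    intro x
    have h1 : (∑ i, c i * g x i) = c i0 * (x i0 + 1) + ∑ i ∈ Finset.univ.erase i0, c i * x i := by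
      rw [← Finset.add_sum_erase _ _ (Finset.mem_univ i0)]
      simp only [hg, Function.update_self]
      congr 1
      apply Finset.sum_congr rfl
      intro i hi
      rw [Function.update_of_ne (Finset.ne_of_mem_erase hi)]
    have h2 : (∑ i, c i * x i) = c i0 * x i0 + ∑ i ∈ Finset.univ.erase i0, c i * x i := by
      rw [← Finset.add_sum_erase _ _ (Finset.mem_univ i0)]
    rw [h1, h2, hi0]
    ring
  have hcards : (Finset.univ.filter fun x : Fin n → ZMod 2 => (∑ i, c i * x i) = 1).card
      = (Finset.univ.filter fun x : Fin n → ZMod 2 => (∑ i, c i * x i) = 0).card := by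
    apply Finset.card_bij' (fun x _ => g x) (fun x _ => g x)
    · intro a ha
      simp only [Finset.mem_filter, Finset.mem_univ, true_and] at *
      rw [hφg, ha]
      decide
    · intro a ha
      simp only [Finset.mem_filter, Finset.mem_univ, true_and] at *
      rw [← zmod2_cases, ← hφg a] at ha
      exact ha
    · intro a _; exact hgg a
    · intro a _; exact hgg a
  have htot : (Finset.univ.filter fun x : Fin n → ZMod 2 => (∑ i, c i * x i) = 1).card
      + (Finset.univ.filter fun x : Fin n → ZMod 2 => (∑ i, c i * x i) = 0).card = 2 ^ n := by
    rw [← Finset.filter_congr (fun x _ => (zmod2_not (∑ i, c i * x i)))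
      (p := fun x : Fin n → ZMod 2 => ¬ ((∑ i, c i * x i) = 1))]
    rw [Finset.card_filter_add_card_filter_not]
    simp
  have hn1 : 1 ≤ n := Nat.one_le_iff_ne_zero.mpr (by rintro rfl; exact i0.elim0)
  have hpow : 2 ^ n = 2 * 2 ^ (n - 1) := by
    conv_lhs => rw [← Nat.succ_pred_eq_of_pos hn1]
    rw [pow_succ']
    rfl
  rw [← hcards, ← two_mul, hpow] at htot
  exact Nat.eq_of_mul_eq_mul_left (by norm_num) htot

lemma hamming_linfun {n : ℕ} {z w : Fin n → ZMod 2} (hzw : z ≠ w) :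
    hamming (linfun z) (linfun w) = 2 ^ (n - 1) := by
  classical
  set c : Fin n → ZMod 2 := fun i => z i + w i with hc
  have hcne : ∃ i, c i = 1 := by
    by_contra hcon
    push_neg at hcon
    apply hzw
    funext i
    have hi := (zmod2_not (c i)).mp (hcon i)
    exact zmod2_add_eq_zero _ _ hi
  obtain ⟨i0, hi0⟩ := hcne
  have hkey : ∀ x : Fin n → ZMod 2, (linfun z x ≠ linfun w x) ↔ (∑ i, c i * x i) = 1 := by
    intro x
    have hsum : (∑ i, c i * x i) = linfun z x + linfun w x := by
      simp [linfun, hc, add_mul, Finset.sum_add_distrib]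
    rw [zmod2_ne_iff, ← hsum]
  unfold hamming
  rw [Finset.filter_congr (fun x _ => hkey x)]
  exact count_linfun c i0 hi0

lemma hamming_le {n : ℕ} (f g : (Fin n → ZMod 2) → ZMod 2) :
    hamming f g ≤ 2 ^ n := by
  unfold hamming
  calc (Finset.univ.filter fun x => f x ≠ g x).card ≤ (Finset.univ : Finset (Fin n → ZMod 2)).card :=
        Finset.card_filter_le _ _
    _ = 2 ^ n := by rw [Finset.card_univ, card_univ_bool]

theorem stmt_14 {n : ℕ} (hn : 3 ≤ n) (f : (Fin n → ZMod 2) → ZMod 2)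
    (ω' : Fin n → ZMod 2) (h : hamming f (linfun ω') ≤ 2 ^ (n - 3)) :
    (∀ ω : Fin n → ZMod 2, |walsh f ω| ≤ |walsh f ω'|) ∧
    (∀ z : Fin n → ZMod 2, z ≠ ω' → |walsh f z| < |walsh f ω'|) := by
  obtain ⟨m, rfl⟩ : ∃ m, n = m + 3 := ⟨n - 3, by omega⟩
  have hD : (hamming f (linfun ω') : ℤ) ≤ 2 ^ m := by
    simp only [Nat.add_sub_cancel] at h
    exact_mod_cast h
  have hDnonneg : (0:ℤ) ≤ (hamming f (linfun ω') : ℤ) := by positivity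
  have hpown : ((2:ℤ) ^ (m + 3)) = 8 * 2 ^ m := by ring
  have hwalsh' : walsh f ω' = 2 ^ (m+3) - 2 * (hamming f (linfun ω') : ℤ) := walsh_eq f ω'
  have hPpos : (0:ℤ) < 2 ^ m := by positivity
  have habs' : |walsh f ω'| = 2 ^ (m+3) - 2 * (hamming f (linfun ω') : ℤ) := by
    rw [hwalsh', abs_of_nonneg]
    rw [hpown]
    linarith
  have key : ∀ z : Fin (m+3) → ZMod 2, z ≠ ω' → |walsh f z| < |walsh f ω'| := by
    intro z hz
    have hlin : hamming (linfun z) (linfun ω') = 2 ^ (m + 2) := by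
      have h0 := hamming_linfun hz
      norm_num at h0
      exact h0
    have ht1 : hamming (linfun z) (linfun ω') ≤ hamming (linfun z) f + hamming f (linfun ω') :=
      hamming_triangle _ _ _
    have ht2 : hamming f (linfun z) ≤ hamming f (linfun ω') + hamming (linfun ω') (linfun z) :=
      hamming_triangle _ _ _
    rw [hamming_comm (linfun z) f] at ht1
    rw [hamming_comm (linfun ω') (linfun z), hlin] at ht2
    rw [hlin] at ht1
    have hE1 : ((2:ℤ) ^ (m + 2)) ≤ (hamming f (linfun z) : ℤ) + (hamming f (linfun ω') : ℤ) := by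
      exact_mod_cast ht1
    have hE2 : (hamming f (linfun z) : ℤ) ≤ (hamming f (linfun ω') : ℤ) + (2:ℤ) ^ (m + 2) := by
      exact_mod_cast ht2
    have hpow2 : ((2:ℤ) ^ (m + 2)) = 4 * 2 ^ m := by ring
    rw [hpow2] at hE1 hE2
    have hwz : walsh f z = 2 ^ (m+3) - 2 * (hamming f (linfun z) : ℤ) := walsh_eq f z
    rw [habs', hwz, abs_lt]
    constructor <;> rw [hpown] <;> linarith
  refine ⟨fun ω => ?_, key⟩
  by_cases hω : ω = ω'
  · subst hω; exact le_refl _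
  · exact le_of_lt (key ω hω)
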